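/- For real λ > 0 and integers 0 ≤ m ≤ k and n ≥ 0, the combinatorial identity Σ_{j=m}^{k} (λ-1)_{k-j} · C(k,j) · C(n+j, j-m) · (j!/m!) = C(k,m) · Γ(n+k+λ)/Γ(n+m+λ) holds, where (a)_r = a(a+1)⋯(a+r-1) is the Pochhammer symbol. -/

import Mathlib

open Real Finset

lemma ascPochhammer_vandermonde (x y : ℝ) : ∀ r : ℕ,
    (ascPochhammer ℝ r).eval (x + y) =
      ∑ ij ∈ Finset.HasAntidiagonal.antidiagonal r, (r.choose ij.1 : ℝ) *
        ((ascPochhammer ℝ ij.1).eval x * (ascPochhammer ℝ ij.2).eval y)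
  | 0 => by simp
  | r + 1 => by
    rw [ascPochhammer_succ_eval, ascPochhammer_vandermonde x y r,
      Finset.sum_antidiagonal_choose_succ_mul
        (fun i j => (ascPochhammer ℝ i).eval x * (ascPochhammer ℝ j).eval y) r,
      Finset.sum_mul, ← Finset.sum_add_distrib]
    refine Finset.sum_congr rfl fun ij hij => ?_
    have h : ij.1 + ij.2 = r := Finset.HasAntidiagonal.mem_antidiagonal.mp hij
    have hc : (ij.1 : ℝ) + (ij.2 : ℝ) = (r : ℝ) := by exact_mod_cast congrArg Nat.cast h
    rw [Nat.choose_symm_of_eq_add h.symm, ascPochhammer_succ_eval, ascPochhammer_succ_eval]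
    linear_combination ((r.choose ij.2 : ℝ) * Polynomial.eval x (ascPochhammer ℝ ij.1) *
      Polynomial.eval y (ascPochhammer ℝ ij.2)) * hc.symm

lemma gamma_ratio (x : ℝ) (hx : 0 < x) : ∀ r : ℕ,
    Real.Gamma (x + r) = Real.Gamma x * (ascPochhammer ℝ r).eval x
  | 0 => by simp
  | r + 1 => by
    have h1 : x + (r + 1 : ℕ) = (x + r) + 1 := by push_cast; ring
    have h2 : x + (r : ℝ) ≠ 0 := by positivity
    rw [h1, Real.Gamma_add_one h2, gamma_ratio x hx r, ascPochhammer_succ_eval]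
    ring

lemma nat_aux (m i k : ℕ) (h : m + i ≤ k) :
    k.choose (m + i) * (m + i).factorial =
      k.choose m * ((k - m).choose i * (i.factorial * m.factorial)) := by
  apply Nat.eq_of_mul_eq_mul_right (Nat.factorial_pos (k - m - i))
  have h1 : k.choose (m + i) * (m + i).factorial * (k - (m + i)).factorial = k.factorial :=
    Nat.choose_mul_factorial_mul_factorial h
  have h2 : (k - m).choose i * i.factorial * (k - m - i).factorial = (k - m).factorial :=
    Nat.choose_mul_factorial_mul_factorial (by omega)
  have h3 : k.choose m * m.factorial * (k - m).factorial = k.factorial :=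
    Nat.choose_mul_factorial_mul_factorial (by omega)
  rw [show k - (m + i) = k - m - i from by omega] at h1
  calc k.choose (m + i) * (m + i).factorial * (k - m - i).factorial = k.factorial := h1
    _ = k.choose m * m.factorial * (k - m).factorial := h3.symm
    _ = k.choose m * m.factorial * ((k - m).choose i * i.factorial * (k - m - i).factorial) := by
        rw [h2]
    _ = k.choose m * ((k - m).choose i * (i.factorial * m.factorial)) * (k - m - i).factorial := by
        ring

theorem chu_vandermonde_corollary (lam : ℝ) (hlam : 0 < lam) (n m k : ℕ) (hmk : m ≤ k) :
    ∑ j ∈ Finset.Icc m k,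
        (Polynomial.eval (lam - 1) (ascPochhammer ℝ (k - j))) * (k.choose j : ℝ) *
          ((n + j).choose (j - m) : ℝ) * ((j.factorial : ℝ) / (m.factorial : ℝ))
    = (k.choose m : ℝ) * (Real.Gamma ((n : ℝ) + k + lam) / Real.Gamma ((n : ℝ) + m + lam)) := by
  set x : ℝ := (n : ℝ) + m + lam with hxdef
  have hx : 0 < x := by positivity
  have hxr : (n : ℝ) + k + lam = x + (k - m : ℕ) := by
    rw [hxdef, Nat.cast_sub hmk]; ring
  have hG : Real.Gamma ((n : ℝ) + k + lam) / Real.Gamma ((n : ℝ) + m + lam)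
      = (ascPochhammer ℝ (k - m)).eval x := by
    rw [hxr, gamma_ratio x hx (k - m), ← hxdef,
      mul_div_cancel_left₀ _ (Real.Gamma_pos_of_pos hx).ne']
  rw [hG]
  have hxsplit : x = ((n : ℝ) + m + 1) + (lam - 1) := by rw [hxdef]; ring
  rw [hxsplit, ascPochhammer_vandermonde, Nat.sum_antidiagonal_eq_sum_range_succ_mk,
    Finset.mul_sum]
  rw [← Finset.Ico_add_one_right_eq_Icc, Finset.sum_Ico_eq_sum_range,
    show k + 1 - m = k - m + 1 from by omega]
  refine Finset.sum_congr rfl fun i hi => ?_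
  have hik : i ≤ k - m := by
    have := Finset.mem_range.mp hi; omega
  have hmik : m + i ≤ k := by omega
  have e1 : k - (m + i) = k - m - i := by omega
  have e2 : m + i - m = i := by omega
  have e3 : n + (m + i) = n + m + i := by omega
  have hA : (ascPochhammer ℝ i).eval ((n : ℝ) + m + 1)
      = (i.factorial : ℝ) * ((n + m + i).choose i : ℝ) := by
    have : ((n : ℝ) + m + 1) = ((n + m + 1 : ℕ) : ℝ) := by push_cast; ring
    rw [this, ← ascPochhammer_eval_cast, ascPochhammer_nat_eq_ascFactorial,
      Nat.ascFactorial_eq_factorial_mul_choose]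
    push_cast; ring
  rw [e1, e2, e3, hA]
  have hnat := nat_aux m i k hmik
  have hnatR : (k.choose (m + i) : ℝ) * ((m + i).factorial : ℝ) =
      (k.choose m : ℝ) * (((k - m).choose i : ℝ) * ((i.factorial : ℝ) * (m.factorial : ℝ))) := by
    exact_mod_cast congrArg (Nat.cast : ℕ → ℝ) hnat
  have hm : (m.factorial : ℝ) ≠ 0 := Nat.cast_ne_zero.mpr m.factorial_ne_zero
  set P : ℝ := (ascPochhammer ℝ (k - m - i)).eval (lam - 1)
  field_simp
  linear_combination (P * ((n + m + i).choose i : ℝ)) * hnatR
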